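/- Let K = {0} ∪ {2^{−n} : n ∈ ℕ} ⊆ ℝ. Then every f : K → ℝ admitting a continuous derivative on K is the restriction of some F ∈ C¹(ℝ); that is, C¹(K) = C¹(ℝ|K). -/

import Mathlib

open Set Filter Topology
open scoped NNReal ENNReal

noncomputable section

/-- `df` is a derivative of `f` on `K ⊆ ℝ`: at every `x ∈ K`,
`(f y - f x - df x * (y - x))/|y - x| → 0` as `y → x` within `K`. -/
def IsDerivOnReal (K : Set ℝ) (f df : ℝ → ℝ) : Prop :=
  ∀ x ∈ K, Filter.Tendsto (fun y => (f y - f x - df x * (y - x)) / |y - x|)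
    (𝓝[K \ {x}] x) (𝓝 0)

/-- The set `K = {0} ∪ {2^{-n} : n ∈ ℕ}`. -/
def geomSet : Set ℝ := insert 0 (Set.range fun n : ℕ => (2:ℝ)⁻¹ ^ n)

namespace GeomC1Aux

/-- The base `C¹` bump function: `ψ t = (max 0 (1 - t²))²`. -/
def psi (t : ℝ) : ℝ := (max 0 (1 - t ^ 2)) ^ 2

/-- The derivative of `psi`. -/
def psi' (t : ℝ) : ℝ := 2 * max 0 (1 - t ^ 2) * (-(2 * t))

lemma hasDerivAt_sq_max (u : ℝ) :
    HasDerivAt (fun v : ℝ => (max 0 v) ^ 2) (2 * max 0 u) u := by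
  rcases lt_trichotomy u 0 with h | h | h
  · have hz : HasDerivAt (fun _ : ℝ => (0:ℝ)) 0 u := hasDerivAt_const u 0
    have heq : (fun _ : ℝ => (0:ℝ)) =ᶠ[𝓝 u] fun v : ℝ => (max 0 v) ^ 2 := by
      filter_upwards [gt_mem_nhds h] with v hv
      simp [max_eq_left hv.le]
    have := hz.congr_of_eventuallyEq heq.symm
    simpa [max_eq_left h.le] using this
  · subst h
    rw [hasDerivAt_iff_isLittleO]
    have hlit : (fun v : ℝ => (max 0 v) ^ 2) =o[𝓝 0] fun v : ℝ => v := by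
      rw [Asymptotics.isLittleO_iff]
      intro c hc
      have hev : ∀ᶠ v : ℝ in 𝓝 0, |v - 0| < c := by
        have : Tendsto (fun v : ℝ => v) (𝓝 0) (𝓝 0) := tendsto_id
        simpa [Real.dist_eq] using Metric.tendsto_nhds.mp this c hc
      filter_upwards [hev] with v hv
      have h1 : max 0 v ≤ |v| := max_le (abs_nonneg v) (le_abs_self v)
      have h2 : (0:ℝ) ≤ max 0 v := le_max_left _ _
      have : (max 0 v) ^ 2 ≤ |v| * |v| := by nlinarith
      have hvc : |v| ≤ c := by simpa using hv.le
      calc ‖(max 0 v) ^ 2‖ = (max 0 v) ^ 2 := by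
            rw [Real.norm_eq_abs, abs_of_nonneg (by positivity)]
        _ ≤ |v| * |v| := this
        _ ≤ c * |v| := by nlinarith [abs_nonneg v]
        _ = c * ‖v‖ := by rw [Real.norm_eq_abs]
    simpa using hlit
  · have hp : HasDerivAt (fun v : ℝ => v ^ 2) (2 * u) u := by
      simpa using hasDerivAt_pow 2 u
    have heq : (fun v : ℝ => v ^ 2) =ᶠ[𝓝 u] fun v : ℝ => (max 0 v) ^ 2 := by
      filter_upwards [lt_mem_nhds h] with v hv
      simp [max_eq_right hv.le]
    have := hp.congr_of_eventuallyEq heq.symm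
    simpa [max_eq_right h.le] using this

lemma hasDerivAt_psi (t : ℝ) : HasDerivAt psi (psi' t) t := by
  have hin : HasDerivAt (fun v : ℝ => 1 - v ^ 2) (-(2 * t)) t := by
    simpa using (HasDerivAt.const_sub 1 (hasDerivAt_pow 2 t))
  have := (hasDerivAt_sq_max (1 - t ^ 2)).comp t hin
  exact this

lemma continuous_psi' : Continuous psi' := by
  unfold psi'
  fun_prop

lemma psi_zero : psi 0 = 1 := by norm_num [psi]

lemma abs_psi_le (t : ℝ) : |psi t| ≤ 1 := by
  have h2 : (0:ℝ) ≤ max 0 (1 - t ^ 2) := le_max_left _ _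
  have h3 : max 0 (1 - t ^ 2) ≤ 1 := max_le zero_le_one (by nlinarith [sq_nonneg t])
  rw [psi, abs_of_nonneg (by positivity)]
  nlinarith

lemma abs_psi'_le (t : ℝ) : |psi' t| ≤ 4 := by
  rcases le_or_gt (t ^ 2) 1 with h | h
  · have ht : |t| ≤ 1 := by
      have := (sq_le_one_iff_abs_le_one t).mp h
      exact this
    have h2 : (0:ℝ) ≤ max 0 (1 - t ^ 2) := le_max_left _ _
    have h3 : max 0 (1 - t ^ 2) ≤ 1 := max_le zero_le_one (by nlinarith [sq_nonneg t])
    have : |psi' t| = 2 * max 0 (1 - t ^ 2) * (2 * |t|) := by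
      rw [psi', abs_mul, abs_mul, abs_neg, abs_mul]
      rw [abs_of_nonneg h2]
      norm_num
    rw [this]
    nlinarith [abs_nonneg t]
  · have : max 0 (1 - t ^ 2) = 0 := max_eq_left (by nlinarith)
    rw [psi', this]
    norm_num

lemma psi_eq_zero {t : ℝ} (h : 1 ≤ |t|) : psi t = 0 := by
  have h2 : 1 ≤ t ^ 2 := by nlinarith [abs_nonneg t, sq_abs t]
  rw [psi, max_eq_left (by linarith)]
  norm_num

lemma psi'_eq_zero {t : ℝ} (h : 1 ≤ |t|) : psi' t = 0 := by
  have h2 : 1 ≤ t ^ 2 := by nlinarith [abs_nonneg t, sq_abs t]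
  rw [psi', max_eq_left (by linarith)]
  ring

lemma contDiff_psi : ContDiff ℝ 1 psi := by
  rw [contDiff_one_iff_deriv]
  constructor
  · exact fun t => (hasDerivAt_psi t).differentiableAt
  · have : deriv psi = psi' := funext fun t => (hasDerivAt_psi t).deriv
    rw [this]; exact continuous_psi'

/-- The nodes `x n = 2⁻ⁿ`. -/
def xg (n : ℕ) : ℝ := (2:ℝ)⁻¹ ^ n

/-- The bump radii `r n = x n / 8`. -/
def rg (n : ℕ) : ℝ := xg n / 8

lemma xg_pos (n : ℕ) : 0 < xg n := pow_pos (by norm_num) n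

lemma rg_pos (n : ℕ) : 0 < rg n := by
  have := xg_pos n; rw [rg]; linarith

lemma xg_le_one (n : ℕ) : xg n ≤ 1 := by
  have : (2:ℝ)⁻¹ ^ n ≤ (2:ℝ)⁻¹ ^ 0 :=
    pow_le_pow_of_le_one (by norm_num) (by norm_num) (Nat.zero_le n)
  simpa [xg] using this

lemma xg_half {m n : ℕ} (h : m < n) : xg n ≤ xg m / 2 := by
  have h1 : (2:ℝ)⁻¹ ^ n ≤ (2:ℝ)⁻¹ ^ (m + 1) :=
    pow_le_pow_of_le_one (by norm_num) (by norm_num) h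
  have h2 : (2:ℝ)⁻¹ ^ (m + 1) = (2:ℝ)⁻¹ ^ m / 2 := by
    rw [pow_succ]; ring
  rw [xg, xg]; rw [h2] at h1; exact h1

/-- Separation: the bump intervals around distinct nodes are disjoint. -/
lemma sep {m n : ℕ} {t : ℝ} (hmn : m ≠ n) (hm : |t - xg m| < rg m) :
    rg n ≤ |t - xg n| := by
  obtain ⟨hm1, hm2⟩ := abs_lt.mp hm
  have hrm : rg m = xg m / 8 := rfl
  have hrn : rg n = xg n / 8 := rfl
  rcases lt_or_gt_of_ne hmn with h | h
  · -- m < n : t is large, x n small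
    have hx : xg n ≤ xg m / 2 := xg_half h
    have hxn := xg_pos n
    have : rg n ≤ t - xg n := by rw [hrn]; linarith [hrm ▸ hm1]
    exact le_trans this (le_abs_self _)
  · -- n < m : t is small, x n large
    have hx : xg m ≤ xg n / 2 := xg_half h
    have hxn := xg_pos n
    have hxm := xg_pos m
    have : rg n ≤ -(t - xg n) := by rw [hrn]; nlinarith [hrm ▸ hm2]
    exact le_abs.mpr (Or.inr this)

/-- A sum of terms with pairwise disjoint bump supports is bounded by a bound on
each individual term. -/
lemma sum_bound (s : Finset ℕ) (t : ℝ) (c : ℕ → ℝ) (B : ℝ) (hB : 0 ≤ B)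
    (hle : ∀ n ∈ s, |c n| ≤ B)
    (hz : ∀ n ∈ s, rg n ≤ |t - xg n| → c n = 0) :
    |∑ n ∈ s, c n| ≤ B := by
  by_cases hex : ∃ n ∈ s, c n ≠ 0
  · obtain ⟨n₀, hn₀s, hn₀⟩ := hex
    have hin : |t - xg n₀| < rg n₀ := by
      by_contra hcon
      push_neg at hcon
      exact hn₀ (hz n₀ hn₀s hcon)
    rw [Finset.sum_eq_single_of_mem n₀ hn₀s
      (fun m hm hne => hz m hm (sep (Ne.symm hne) hin))]
    exact hle n₀ hn₀s
  · push_neg at hex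
    rw [Finset.sum_eq_zero hex]
    simpa using hB

/-- Key construction: given values `b n` at the nodes with `b n / x n → 0`,
there is a `C¹` function vanishing (to first order) at `0` that takes the
value `b n` at `x n`. -/
lemma key (b : ℕ → ℝ) (hb : Tendsto (fun n => b n / xg n) atTop (𝓝 0)) :
    ∃ G : ℝ → ℝ, ContDiff ℝ 1 G ∧ G 0 = 0 ∧ ∀ n, G (xg n) = b n := by
  classical
  -- thresholds
  have hMex : ∀ k : ℕ, ∃ M : ℕ, ∀ n, M ≤ n → |b n| ≤ (2:ℝ)⁻¹ ^ k * xg n := by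
    intro k
    have hk : (0:ℝ) < (2:ℝ)⁻¹ ^ k := pow_pos (by norm_num) k
    obtain ⟨M, hM⟩ := Metric.tendsto_atTop.mp hb ((2:ℝ)⁻¹ ^ k) hk
    refine ⟨M, fun n hn => ?_⟩
    have h2 := hM n hn
    rw [Real.dist_eq, sub_zero, abs_div, abs_of_pos (xg_pos n)] at h2
    have := (div_lt_iff₀ (xg_pos n)).mp h2
    linarith
  choose M hM using hMex
  set N : ℕ → ℕ := fun k => Nat.rec (M 0) (fun k ih => max (ih + 1) (M (k + 1))) k with hN
  have hNM : ∀ k, M k ≤ N k := by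
    intro k
    cases k with
    | zero => exact le_refl _
    | succ k => exact le_max_right _ _
  have hNlt : ∀ k, N k < N (k + 1) := fun k =>
    lt_of_lt_of_le (Nat.lt_succ_self _) (le_max_left _ _)
  have hNmono : StrictMono N := strictMono_nat_of_lt_succ hNlt
  have hNb : ∀ k n, N k ≤ n → |b n| ≤ (2:ℝ)⁻¹ ^ k * xg n :=
    fun k n h => hM k n (le_trans (hNM k) h)
  -- the bump terms
  set term : ℕ → ℝ → ℝ := fun n t => b n * psi ((t - xg n) / rg n) with hterm_def
  set term' : ℕ → ℝ → ℝ :=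
    fun n t => b n * (psi' ((t - xg n) / rg n) * (1 / rg n)) with hterm'_def
  have hterm : ∀ n t, HasDerivAt (term n) (term' n t) t := by
    intro n t
    have hin : HasDerivAt (fun t => (t - xg n) / rg n) (1 / rg n) t := by
      simpa using ((hasDerivAt_id t).sub_const (xg n)).div_const (rg n)
    have := ((hasDerivAt_psi ((t - xg n) / rg n)).comp t hin).const_mul (b n)
    simpa [hterm_def, hterm'_def, Function.comp] using this
  have hterm_cd : ∀ n, ContDiff ℝ 1 (term n) := by
    intro n
    exact contDiff_const.mul
      (contDiff_psi.comp ((contDiff_id.sub contDiff_const).div_const _))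
  have hterm'_cont : ∀ n, Continuous (term' n) := by
    intro n
    exact continuous_const.mul
      ((continuous_psi'.comp
        ((continuous_id.sub continuous_const).div_const _)).mul continuous_const)
  -- values of terms at nodes and at 0
  have hterm_self : ∀ n, term n (xg n) = b n := by
    intro n
    simp [hterm_def, psi_zero]
  have hterm_ne : ∀ {m n : ℕ}, m ≠ n → term n (xg m) = 0 := by
    intro m n hmn
    have hm : |xg m - xg m| < rg m := by
      simpa using rg_pos m
    have := sep hmn hm
    have harg : 1 ≤ |(xg m - xg n) / rg n| := by
      rw [abs_div, abs_of_pos (rg_pos n)]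
      rw [le_div_iff₀ (rg_pos n)]
      linarith
    show b n * psi ((xg m - xg n) / rg n) = 0
    rw [psi_eq_zero harg, mul_zero]
  have hterm_zero : ∀ n, term n 0 = 0 := by
    intro n
    have harg : 1 ≤ |(0 - xg n) / rg n| := by
      rw [abs_div, abs_of_pos (rg_pos n)]
      rw [le_div_iff₀ (rg_pos n)]
      have := xg_pos n
      rw [zero_sub, abs_neg, abs_of_pos (xg_pos n), rg]
      linarith
    show b n * psi ((0 - xg n) / rg n) = 0
    rw [psi_eq_zero harg, mul_zero]
  -- term vanishing outside bump support
  have hterm_supp : ∀ n t, rg n ≤ |t - xg n| → term n t = 0 := by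
    intro n t h
    have harg : 1 ≤ |(t - xg n) / rg n| := by
      rw [abs_div, abs_of_pos (rg_pos n), le_div_iff₀ (rg_pos n)]
      linarith
    show b n * psi ((t - xg n) / rg n) = 0
    rw [psi_eq_zero harg, mul_zero]
  have hterm'_supp : ∀ n t, rg n ≤ |t - xg n| → term' n t = 0 := by
    intro n t h
    have harg : 1 ≤ |(t - xg n) / rg n| := by
      rw [abs_div, abs_of_pos (rg_pos n), le_div_iff₀ (rg_pos n)]
      linarith
    show b n * (psi' ((t - xg n) / rg n) * (1 / rg n)) = 0
    rw [psi'_eq_zero harg, zero_mul, mul_zero]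
  -- blocks
  set blk : ℕ → Finset ℕ := fun k => Finset.Ico (N k) (N (k + 1)) with hblk
  set h : ℕ → ℝ → ℝ := fun k t => ∑ n ∈ blk k, term n t with hh
  set h' : ℕ → ℝ → ℝ := fun k t => ∑ n ∈ blk k, term' n t with hh'
  set u : ℕ → ℝ := fun k => 32 * (2:ℝ)⁻¹ ^ k with hu_def
  have hu : Summable u := (summable_geometric_of_lt_one (by norm_num) (by norm_num)).mul_left 32
  have hupos : ∀ k, (0:ℝ) ≤ u k := by
    intro k
    have : (0:ℝ) < (2:ℝ)⁻¹ ^ k := pow_pos (by norm_num) k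
    rw [hu_def]; positivity
  -- bounds
  have hbound : ∀ k t, ‖h k t‖ ≤ u k := by
    intro k t
    rw [Real.norm_eq_abs, hh]
    apply sum_bound _ _ _ _ (hupos k)
    · intro n hn
      have hnk : N k ≤ n := (Finset.mem_Ico.mp hn).1
      have h1 : |b n| ≤ (2:ℝ)⁻¹ ^ k * xg n := hNb k n hnk
      have h2 : |term n t| ≤ |b n| * 1 := by
        rw [hterm_def, abs_mul]
        exact mul_le_mul_of_nonneg_left (abs_psi_le _) (abs_nonneg _)
      have h3 : (2:ℝ)⁻¹ ^ k * xg n ≤ (2:ℝ)⁻¹ ^ k * 1 :=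
        mul_le_mul_of_nonneg_left (xg_le_one n) (by positivity)
      have hk : (0:ℝ) < (2:ℝ)⁻¹ ^ k := pow_pos (by norm_num) k
      rw [hu_def]
      nlinarith
    · intro n _ hsupp
      exact hterm_supp n t hsupp
  have hbound' : ∀ k t, ‖h' k t‖ ≤ u k := by
    intro k t
    rw [Real.norm_eq_abs, hh']
    apply sum_bound _ _ _ _ (hupos k)
    · intro n hn
      have hnk : N k ≤ n := (Finset.mem_Ico.mp hn).1
      have h1 : |b n| ≤ (2:ℝ)⁻¹ ^ k * xg n := hNb k n hnk
      have hr := rg_pos n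
      have hx := xg_pos n
      have h2 : |term' n t| = |b n| * (|psi' ((t - xg n) / rg n)| * (1 / rg n)) := by
        rw [hterm'_def, abs_mul, abs_mul, abs_of_pos (by positivity : (0:ℝ) < 1 / rg n)]
      have h3 : |psi' ((t - xg n) / rg n)| ≤ 4 := abs_psi'_le _
      have h4 : (1:ℝ) / rg n = 8 / xg n := by
        rw [rg]; field_simp
      have h5 : |term' n t| ≤ |b n| * (4 * (8 / xg n)) := by
        rw [h2, h4]
        apply mul_le_mul_of_nonneg_left _ (abs_nonneg _)
        apply mul_le_mul_of_nonneg_right h3 (by positivity)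
      have h6 : |b n| * (4 * (8 / xg n)) ≤ ((2:ℝ)⁻¹ ^ k * xg n) * (4 * (8 / xg n)) := by
        apply mul_le_mul_of_nonneg_right h1 (by positivity)
      have h7 : ((2:ℝ)⁻¹ ^ k * xg n) * (4 * (8 / xg n)) = 32 * (2:ℝ)⁻¹ ^ k := by
        field_simp
        ring
      rw [hu_def]
      calc |term' n t| ≤ ((2:ℝ)⁻¹ ^ k * xg n) * (4 * (8 / xg n)) := le_trans h5 h6
        _ = 32 * (2:ℝ)⁻¹ ^ k := h7
    · intro n _ hsupp
      exact hterm'_supp n t hsupp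
  have hderivh : ∀ k t, HasDerivAt (h k) (h' k t) t := by
    intro k t
    rw [hh, hh']
    exact HasDerivAt.fun_sum (fun n _ => hterm n t)
  have hconth' : ∀ k, Continuous (h' k) := by
    intro k
    rw [hh']
    exact continuous_finset_sum _ (fun n _ => hterm'_cont n)
  -- C¹ of the tsum part
  have hsum_at : ∀ t : ℝ, Summable (fun k => h k t) :=
    fun t => Summable.of_norm_bounded hu (fun k => hbound k t)
  have hd : ∀ t : ℝ, HasDerivAt (fun y => ∑' k, h k y) (∑' k, h' k t) t :=
    fun t => hasDerivAt_tsum hu hderivh hbound' (hsum_at 0) t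
  have hH : ContDiff ℝ 1 (fun t => ∑' k, h k t) := by
    rw [contDiff_one_iff_deriv]
    constructor
    · exact fun t => (hd t).differentiableAt
    · have : deriv (fun y => ∑' k, h k y) = fun t => ∑' k, h' k t :=
        funext fun t => (hd t).deriv
      rw [this]
      exact continuous_tsum hconth' hu (fun k t => hbound' k t)
  -- the function G
  refine ⟨fun t => (∑ n ∈ Finset.range (N 0), term n t) + ∑' k, h k t, ?_, ?_, ?_⟩
  · exact (ContDiff.sum (fun n _ => hterm_cd n)).add hH
  · -- value at 0
    have h1 : (∑ n ∈ Finset.range (N 0), term n 0) = 0 :=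
      Finset.sum_eq_zero (fun n _ => hterm_zero n)
    have h2 : ∀ k, h k 0 = 0 := by
      intro k
      rw [hh]
      exact Finset.sum_eq_zero (fun n _ => hterm_zero n)
    simp [h1, h2]
  · -- values at nodes
    intro m
    rcases lt_or_ge m (N 0) with hm | hm
    · have h1 : (∑ n ∈ Finset.range (N 0), term n (xg m)) = b m := by
        rw [Finset.sum_eq_single_of_mem m (Finset.mem_range.mpr hm)
          (fun n _ hne => hterm_ne (Ne.symm hne))]
        exact hterm_self m
      have h2 : ∀ k, h k (xg m) = 0 := by
        intro k
        rw [hh]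
        apply Finset.sum_eq_zero
        intro n hn
        have hnk : N k ≤ n := (Finset.mem_Ico.mp hn).1
        have : m < n := lt_of_lt_of_le hm (le_trans (hNmono.monotone (Nat.zero_le k)) hnk)
        exact hterm_ne this.ne
      simp [h1, h2]
    · -- m ≥ N 0 : find the block of m
      set k₀ : ℕ := Nat.findGreatest (fun k => N k ≤ m) m with hk₀def
      have hk₀1 : N k₀ ≤ m := Nat.findGreatest_spec (P := fun k => N k ≤ m) (Nat.zero_le m) hm
      have hNk : ∀ k, k ≤ N k := fun k => hNmono.le_apply
      have hk₀2 : m < N (k₀ + 1) := by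
        by_contra hcon
        push_neg at hcon
        have h1 : k₀ + 1 ≤ m := le_trans (hNk (k₀ + 1)) hcon
        have h2 : k₀ + 1 ≤ k₀ := Nat.le_findGreatest (P := fun k => N k ≤ m) h1 hcon
        omega
      have h1 : (∑ n ∈ Finset.range (N 0), term n (xg m)) = 0 := by
        apply Finset.sum_eq_zero
        intro n hn
        have : n < m := lt_of_lt_of_le (Finset.mem_range.mp hn) hm
        exact hterm_ne this.ne'
      have h2 : ∀ k, k ≠ k₀ → h k (xg m) = 0 := by
        intro k hk
        rw [hh]
        apply Finset.sum_eq_zero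
        intro n hn
        obtain ⟨hn1, hn2⟩ := Finset.mem_Ico.mp hn
        rcases lt_or_gt_of_ne hk with hlt | hgt
        · -- k < k₀ : n < N (k+1) ≤ N k₀ ≤ m
          have : n < m :=
            lt_of_lt_of_le hn2 (le_trans (hNmono.monotone hlt) hk₀1)
          exact hterm_ne this.ne'
        · -- k₀ < k : n ≥ N k ≥ N (k₀+1) > m
          have : m < n :=
            lt_of_lt_of_le hk₀2 (le_trans (hNmono.monotone hgt) hn1)
          exact hterm_ne this.ne
      have h3 : h k₀ (xg m) = b m := by
        show (∑ n ∈ blk k₀, term n (xg m)) = b m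
        rw [Finset.sum_eq_single_of_mem m (Finset.mem_Ico.mpr ⟨hk₀1, hk₀2⟩)
          (fun n _ hne => hterm_ne (Ne.symm hne))]
        exact hterm_self m
      have h4 : (∑' k, h k (xg m)) = b m := by
        rw [tsum_eq_single k₀ (fun k hk => h2 k hk)]
        exact h3
      simp [h1, h4]

end GeomC1Aux

open GeomC1Aux in
/-- For `K = {0} ∪ {2^{-n} : n ∈ ℕ}`, every `f` admitting a continuous derivative on
`K` is the restriction of a `C¹` function on `ℝ`: `C¹(K) = C¹(ℝ|K)`. -/
theorem geomSet_c1_eq_restriction :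
    ∀ f df : ℝ → ℝ, ContinuousOn df geomSet → IsDerivOnReal geomSet f df →
      ∃ F : ℝ → ℝ, ContDiff ℝ 1 F ∧ EqOn F f geomSet := by
  intro f df _ hderiv
  set b : ℕ → ℝ := fun n => f (xg n) - f 0 - df 0 * xg n with hbdef
  have h0mem : (0:ℝ) ∈ geomSet := Set.mem_insert _ _
  have ht := hderiv 0 h0mem
  have hxg0 : Tendsto xg atTop (𝓝 0) :=
    tendsto_pow_atTop_nhds_zero_of_lt_one (by norm_num) (by norm_num)
  have hxs : Tendsto xg atTop (𝓝[geomSet \ {0}] 0) := by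
    apply tendsto_nhdsWithin_of_tendsto_nhds_of_eventually_within _ hxg0
    apply Eventually.of_forall
    intro n
    exact ⟨Set.mem_insert_iff.mpr (Or.inr ⟨n, rfl⟩),
      by simp [Set.mem_singleton_iff, (xg_pos n).ne']⟩
  have hcomp := ht.comp hxs
  have hb : Tendsto (fun n => b n / xg n) atTop (𝓝 0) := by
    apply hcomp.congr
    intro n
    have hx := xg_pos n
    simp only [Function.comp]
    rw [sub_zero, abs_of_pos hx]
  obtain ⟨G, hG, hG0, hGn⟩ := key b hb
  refine ⟨fun t => f 0 + df 0 * t + G t, ?_, ?_⟩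
  · exact (contDiff_const.add (contDiff_const.mul contDiff_id)).add hG
  · intro y hy
    rcases Set.mem_insert_iff.mp hy with h | h
    · subst h
      simp [hG0]
    · obtain ⟨n, hn⟩ := h
      have : y = xg n := hn.symm
      subst this
      show f 0 + df 0 * xg n + G (xg n) = f (xg n)
      rw [hGn n]
      show f 0 + df 0 * xg n + (f (xg n) - f 0 - df 0 * xg n) = f (xg n)
      ring

end
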